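/- For 0 < ℓ, ℓ₀ < 1/2, the Kullback-Leibler divergence between cardioid distributions with the same location μ and concentrations ℓ and ℓ₀ equals 1 − sqrt(1 − 4ℓ²) − (ℓ/ℓ₀)(1 − sqrt(1 − 4ℓ₀²)) + log ℓ − log ℓ₀ + (1/2) log((1 + sqrt(1 − 4ℓ²))/(1 − sqrt(1 − 4ℓ²))) − (1/2) log((1 + sqrt(1 − 4ℓ₀²))/(1 − sqrt(1 − 4ℓ₀²))). -/

import Mathlib

open Real MeasureTheory

/-- Cardioid density. -/
noncomputable def cardioidDensity (μ ℓ x : ℝ) : ℝ :=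
  (1 + 2 * ℓ * Real.cos (x - μ)) / (2 * Real.pi)

open intervalIntegral

lemma cauchy_aux (g : ℂ → ℂ)
    (hg : DifferentiableOn ℂ g (Metric.closedBall 0 1)) :
    ∫ θ in (0:ℝ)..(2*π), g (Complex.exp (θ * Complex.I)) = 2 * π * g 0 := by
  have h := hg.circleIntegral_sub_inv_smul (c := 0) (w := 0) (by simp)
  rw [circleIntegral] at h
  simp only [deriv_circleMap, circleMap_zero, sub_zero, smul_eq_mul, Complex.ofReal_one,
    one_mul] at h
  have key : ∀ θ : ℝ, Complex.exp (θ * Complex.I) * Complex.I *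
      ((Complex.exp (θ * Complex.I))⁻¹ * g (Complex.exp (θ * Complex.I)))
      = Complex.I * g (Complex.exp (θ * Complex.I)) := by
    intro θ
    have hne : Complex.exp (θ * Complex.I) ≠ 0 := Complex.exp_ne_zero _
    field_simp
  simp only [key] at h
  rw [intervalIntegral.integral_const_mul] at h
  rw [show (2 * (π:ℂ) * Complex.I) * g 0 = Complex.I * (2 * π * g 0) by ring] at h
  exact mul_left_cancel₀ Complex.I_ne_zero h

section core

lemma slit_mem {r : ℝ} (hr0 : 0 ≤ r) (hr1 : r < 1) {z : ℂ} (hz : ‖z‖ ≤ 1) :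
    1 + (r:ℂ) * z ∈ Complex.slitPlane := by
  apply Complex.mem_slitPlane_iff.2; left
  have h1 : |z.re| ≤ 1 := (Complex.abs_re_le_norm z).trans hz
  have := abs_le.1 h1
  simp only [Complex.add_re, Complex.one_re, Complex.mul_re, Complex.ofReal_re,
    Complex.ofReal_im, zero_mul, sub_zero]
  nlinarith

lemma F_diff {r : ℝ} (hr0 : 0 ≤ r) (hr1 : r < 1) : DifferentiableOn ℂ (fun z => Complex.log (1 + (r:ℂ) * z))
    (Metric.closedBall 0 1) := by
  intro z hz
  have hz' : ‖z‖ ≤ 1 := by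
    simpa [Complex.dist_eq] using Metric.mem_closedBall.1 hz
  have hinner : DifferentiableAt ℂ (fun z : ℂ => 1 + (r:ℂ) * z) z := by fun_prop
  exact ((Complex.differentiableAt_log (slit_mem hr0 hr1 hz')).comp z
    hinner).differentiableWithinAt

lemma C1 {r : ℝ} (hr0 : 0 ≤ r) (hr1 : r < 1) : ∫ θ in (0:ℝ)..(2*π), Complex.log (1 + (r:ℝ) * Complex.exp (θ * Complex.I)) = 0 := by
  have := cauchy_aux _ (F_diff hr0 hr1)
  simpa using this

lemma C2 {r : ℝ} (hr0 : 0 ≤ r) (hr1 : r < 1) : ∫ θ in (0:ℝ)..(2*π),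
    Complex.exp (θ * Complex.I) * Complex.log (1 + (r:ℝ) * Complex.exp (θ * Complex.I)) = 0 := by
  have hg : DifferentiableOn ℂ (fun z => z * Complex.log (1 + (r:ℂ) * z))
      (Metric.closedBall 0 1) := (differentiableOn_id).mul (F_diff hr0 hr1)
  have := cauchy_aux _ hg
  simpa using this

lemma derivF {r : ℝ} (hr0 : 0 ≤ r) (hr1 : r < 1) : HasDerivAt (fun z : ℂ => Complex.log (1 + (r:ℂ) * z)) r 0 := by
  have h1 : HasDerivAt (fun z : ℂ => 1 + (r:ℂ) * z) r 0 := by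
    simpa using ((hasDerivAt_id (0:ℂ)).const_mul (r:ℂ)).const_add 1
  have hs : (1 + (r:ℂ) * 0) ∈ Complex.slitPlane := by
    simpa using slit_mem hr0 hr1 (z := 0) (by simp)
  have h2 := Complex.hasDerivAt_log hs
  have := h2.comp 0 h1
  simpa [Function.comp_def] using this

lemma C3 {r : ℝ} (hr0 : 0 ≤ r) (hr1 : r < 1) : ∫ θ in (0:ℝ)..(2*π),
    (Complex.exp (θ * Complex.I))⁻¹ * Complex.log (1 + (r:ℝ) * Complex.exp (θ * Complex.I))
      = 2 * π * r := by
  have hnhds : Metric.closedBall (0:ℂ) 1 ∈ nhds (0:ℂ) :=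
    Metric.closedBall_mem_nhds 0 one_pos
  have hg : DifferentiableOn ℂ (dslope (fun z => Complex.log (1 + (r:ℂ) * z)) 0)
      (Metric.closedBall 0 1) :=
    (Complex.differentiableOn_dslope hnhds).2 (F_diff hr0 hr1)
  have h := cauchy_aux _ hg
  have h0 : dslope (fun z => Complex.log (1 + (r:ℂ) * z)) 0 0 = r := by
    rw [dslope_same]
    exact (derivF hr0 hr1).deriv
  rw [h0] at h
  rw [← h]
  apply intervalIntegral.integral_congr
  intro θ _
  have hne : Complex.exp (θ * Complex.I) ≠ 0 := Complex.exp_ne_zero _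
  symm
  show dslope (fun z => Complex.log (1 + (r:ℂ) * z)) 0 (Complex.exp (θ * Complex.I)) = _
  rw [dslope_of_ne _ hne, slope_def_field]
  simp [div_eq_inv_mul]
end core

lemma re_logD (r θ : ℝ) :
    (Complex.log (1 + (r:ℝ) * Complex.exp (θ * Complex.I))).re
      = Real.log (1 + r^2 + 2*r*Real.cos θ) / 2 := by
  rw [Complex.log_re, Complex.norm_def, Real.log_sqrt (Complex.normSq_nonneg _)]
  congr 2
  rw [Complex.normSq_apply]
  simp only [Complex.add_re, Complex.one_re, Complex.mul_re, Complex.ofReal_re,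
    Complex.ofReal_im, zero_mul, sub_zero, Complex.add_im, Complex.one_im, Complex.mul_im,
    zero_add, Complex.exp_ofReal_mul_I_re, Complex.exp_ofReal_mul_I_im]
  nlinarith [Real.sin_sq_add_cos_sq θ]

lemma cont_logC {r : ℝ} (hr0 : 0 ≤ r) (hr1 : r < 1) :
    Continuous fun θ : ℝ => Complex.log (1 + (r:ℝ) * Complex.exp (θ * Complex.I)) := by
  rw [continuous_iff_continuousAt]
  intro θ
  have hmem : (1 + (r:ℂ) * Complex.exp (θ * Complex.I)) ∈ Complex.slitPlane :=
    slit_mem hr0 hr1 (by simp [Complex.norm_exp_ofReal_mul_I])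
  have hin : ContinuousAt (fun θ : ℝ => 1 + (r:ℂ) * Complex.exp (θ * Complex.I)) θ := by
    fun_prop
  exact hin.clog hmem


lemma intA {r : ℝ} (hr0 : 0 ≤ r) (hr1 : r < 1) :
    ∫ θ in (0:ℝ)..(2*π), Real.log (1 + r^2 + 2*r*Real.cos θ) = 0 := by
  have hcont := cont_logC hr0 hr1
  have hre : ∫ θ in (0:ℝ)..(2*π),
      Complex.reCLM (Complex.log (1 + (r:ℝ) * Complex.exp (θ * Complex.I))) = 0 := by
    rw [Complex.reCLM.intervalIntegral_comp_comm (hcont.intervalIntegrable _ _), C1 hr0 hr1]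
    simp
  have heq : ∀ θ : ℝ, Real.log (1 + r^2 + 2*r*Real.cos θ)
      = 2 * Complex.reCLM (Complex.log (1 + (r:ℝ) * Complex.exp (θ * Complex.I))) := by
    intro θ
    simp only [Complex.reCLM_apply, re_logD]
    ring
  rw [intervalIntegral.integral_congr (fun θ _ => heq θ),
    intervalIntegral.integral_const_mul, hre, mul_zero]

lemma intB {r : ℝ} (hr0 : 0 ≤ r) (hr1 : r < 1) :
    ∫ θ in (0:ℝ)..(2*π), Real.cos θ * Real.log (1 + r^2 + 2*r*Real.cos θ) = 2*π*r := by
  have hcont := cont_logC hr0 hr1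
  have hc2 : Continuous fun θ : ℝ =>
      Complex.exp (θ * Complex.I) * Complex.log (1 + (r:ℝ) * Complex.exp (θ * Complex.I)) := by
    fun_prop
  have hc3 : Continuous fun θ : ℝ =>
      (Complex.exp (θ * Complex.I))⁻¹ *
        Complex.log (1 + (r:ℝ) * Complex.exp (θ * Complex.I)) := by
    have : Continuous fun θ : ℝ => (Complex.exp (θ * Complex.I))⁻¹ := by
      rw [continuous_iff_continuousAt]
      intro θ
      exact ContinuousAt.inv₀ (by fun_prop) (Complex.exp_ne_zero _)
    exact this.mul hcont
  have hsum : ∫ θ in (0:ℝ)..(2*π),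
      (Complex.exp (θ * Complex.I) * Complex.log (1 + (r:ℝ) * Complex.exp (θ * Complex.I))
       + (Complex.exp (θ * Complex.I))⁻¹ *
          Complex.log (1 + (r:ℝ) * Complex.exp (θ * Complex.I))) = 2 * π * r := by
    rw [intervalIntegral.integral_add (hc2.intervalIntegrable _ _) (hc3.intervalIntegrable _ _),
      C2 hr0 hr1, C3 hr0 hr1, zero_add]
  have hpt : ∀ θ : ℝ,
      Complex.exp (θ * Complex.I) * Complex.log (1 + (r:ℝ) * Complex.exp (θ * Complex.I))
       + (Complex.exp (θ * Complex.I))⁻¹ *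
          Complex.log (1 + (r:ℝ) * Complex.exp (θ * Complex.I))
      = ((2 * Real.cos θ : ℝ) : ℂ) * Complex.log (1 + (r:ℝ) * Complex.exp (θ * Complex.I)) := by
    intro θ
    rw [← add_mul]
    congr 1
    rw [← Complex.exp_neg]
    push_cast [Complex.ofReal_cos]
    rw [Complex.two_cos, neg_mul]
  have hptc : Continuous fun θ : ℝ => ((2 * Real.cos θ : ℝ) : ℂ) *
      Complex.log (1 + (r:ℝ) * Complex.exp (θ * Complex.I)) :=
    (Complex.continuous_ofReal.comp (by fun_prop)).mul hcont
  have hsum2 : ∫ θ in (0:ℝ)..(2*π), ((2 * Real.cos θ : ℝ) : ℂ) *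
      Complex.log (1 + (r:ℝ) * Complex.exp (θ * Complex.I)) = 2 * π * r := by
    rw [← intervalIntegral.integral_congr (fun θ _ => hpt θ)]
    exact hsum
  have hre : ∫ θ in (0:ℝ)..(2*π), Complex.reCLM (((2 * Real.cos θ : ℝ) : ℂ) *
      Complex.log (1 + (r:ℝ) * Complex.exp (θ * Complex.I))) = 2 * π * r := by
    rw [Complex.reCLM.intervalIntegral_comp_comm (hptc.intervalIntegrable _ _), hsum2]
    simp
  rw [← hre]
  apply intervalIntegral.integral_congr
  intro θ _
  simp only [Complex.reCLM_apply, Complex.re_ofReal_mul, re_logD]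
  ring


lemma periodic_shift {f : ℝ → ℝ} (hf : Function.Periodic f (2*π)) (μ : ℝ) :
    ∫ x in (0:ℝ)..(2*π), f (x - μ) = ∫ x in (0:ℝ)..(2*π), f x := by
  rw [intervalIntegral.integral_comp_sub_right f μ]
  rw [show (0:ℝ) - μ = -μ by ring, show 2*π - μ = -μ + 2*π by ring]
  simpa using hf.intervalIntegral_add_eq (-μ) 0

lemma periodic_D (r : ℝ) : Function.Periodic (fun t => 1 + r^2 + 2*r*Real.cos t) (2*π) := by
  intro x; simp [Real.cos_add_two_pi]

lemma shift_log (μ : ℝ) {r : ℝ} (hr0 : 0 ≤ r) (hr1 : r < 1) :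
    ∫ x in (0:ℝ)..(2*π), Real.log (1 + r^2 + 2*r*Real.cos (x - μ)) = 0 := by
  rw [periodic_shift (f := fun t => Real.log (1 + r^2 + 2*r*Real.cos t))
    (((periodic_D r).comp Real.log)) μ]
  exact intA hr0 hr1

lemma shift_coslog (μ : ℝ) {r : ℝ} (hr0 : 0 ≤ r) (hr1 : r < 1) :
    ∫ x in (0:ℝ)..(2*π), Real.cos (x - μ) * Real.log (1 + r^2 + 2*r*Real.cos (x - μ))
      = 2*π*r := by
  rw [periodic_shift (f := fun t => Real.cos t * Real.log (1 + r^2 + 2*r*Real.cos t))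
    (Real.cos_periodic.mul ((periodic_D r).comp Real.log)) μ]
  exact intB hr0 hr1

lemma int_cos_shift (μ : ℝ) : ∫ x in (0:ℝ)..(2*π), Real.cos (x - μ) = 0 := by
  rw [periodic_shift Real.cos_periodic μ, integral_cos]
  simp

-- facts about s, r, a
lemma sfacts {ℓ : ℝ} (h0 : 0 < ℓ) (h1 : ℓ < 1/2) :
    0 < Real.sqrt (1 - 4*ℓ^2) ∧ Real.sqrt (1 - 4*ℓ^2) < 1 ∧
      (Real.sqrt (1 - 4*ℓ^2))^2 = 1 - 4*ℓ^2 := by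
  have hpos : (0:ℝ) < 1 - 4*ℓ^2 := by nlinarith
  have hsq := Real.sq_sqrt hpos.le
  have hs0 := Real.sqrt_pos.2 hpos
  refine ⟨hs0, ?_, hsq⟩
  nlinarith [hsq, hs0]

lemma rfacts {ℓ : ℝ} (h0 : 0 < ℓ) (h1 : ℓ < 1/2) :
    0 < (1 - Real.sqrt (1 - 4*ℓ^2))/(2*ℓ) ∧ (1 - Real.sqrt (1 - 4*ℓ^2))/(2*ℓ) < 1 := by
  obtain ⟨hs0, hs1, hsq⟩ := sfacts h0 h1
  constructor
  · apply div_pos (by linarith) (by linarith)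
  · rw [div_lt_one (by linarith)]
    nlinarith

lemma decomp {ℓ : ℝ} (h0 : 0 < ℓ) (h1 : ℓ < 1/2) (c : ℝ) :
    1 + 2*ℓ*c = ((1 + Real.sqrt (1 - 4*ℓ^2))/2) *
      (1 + ((1 - Real.sqrt (1 - 4*ℓ^2))/(2*ℓ))^2
        + 2*((1 - Real.sqrt (1 - 4*ℓ^2))/(2*ℓ))*c) := by
  obtain ⟨hs0, hs1, hsq⟩ := sfacts h0 h1
  have hl : ℓ ≠ 0 := h0.ne'
  generalize Real.sqrt (1 - 4*ℓ^2) = s at hsq ⊢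
  field_simp
  linear_combination ((1 - s) + 4*ℓ*c) * hsq

lemma Dpos {r : ℝ} (hr0 : 0 < r) (hr1 : r < 1) {c : ℝ} (hc : -1 ≤ c) (hc' : c ≤ 1) :
    0 < 1 + r^2 + 2*r*c := by nlinarith

lemma half_log {ℓ : ℝ} (h0 : 0 < ℓ) (h1 : ℓ < 1/2) :
    (1/2) * Real.log ((1 + Real.sqrt (1 - 4*ℓ^2))/(1 - Real.sqrt (1 - 4*ℓ^2)))
      = Real.log ((1 + Real.sqrt (1 - 4*ℓ^2))/2) - Real.log ℓ := by
  obtain ⟨hs0, hs1, hsq⟩ := sfacts h0 h1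
  have key : (1 + Real.sqrt (1 - 4*ℓ^2))/(1 - Real.sqrt (1 - 4*ℓ^2))
      = ((1 + Real.sqrt (1 - 4*ℓ^2))/(2*ℓ))^2 := by
    have h1s : 1 - Real.sqrt (1 - 4*ℓ^2) ≠ 0 := by linarith
    generalize Real.sqrt (1 - 4*ℓ^2) = s at hsq h1s ⊢
    field_simp
    linear_combination (1 + s) * hsq
  rw [key, Real.log_pow, Real.log_div (by linarith) (by positivity),
    Real.log_div (by linarith) (by norm_num), Real.log_mul (by norm_num) h0.ne']
  push_cast
  ring

theorem cardioid_KLD (μ ℓ ℓ₀ : ℝ) (h0 : 0 < ℓ) (h1 : ℓ < 1/2)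
    (h0' : 0 < ℓ₀) (h1' : ℓ₀ < 1/2) :
    ∫ x in (0:ℝ)..(2 * Real.pi),
        cardioidDensity μ ℓ x *
          Real.log (cardioidDensity μ ℓ x / cardioidDensity μ ℓ₀ x)
      = 1 - Real.sqrt (1 - 4 * ℓ^2)
        - (ℓ / ℓ₀) * (1 - Real.sqrt (1 - 4 * ℓ₀^2))
        + Real.log ℓ - Real.log ℓ₀
        + (1/2) * Real.log ((1 + Real.sqrt (1 - 4 * ℓ^2)) / (1 - Real.sqrt (1 - 4 * ℓ^2)))
        - (1/2) * Real.log ((1 + Real.sqrt (1 - 4 * ℓ₀^2)) / (1 - Real.sqrt (1 - 4 * ℓ₀^2))) := by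
  obtain ⟨hs0, hs1, hsq⟩ := sfacts h0 h1
  obtain ⟨hs0', hs1', hsq'⟩ := sfacts h0' h1'
  obtain ⟨hr0, hr1⟩ := rfacts h0 h1
  obtain ⟨hr0', hr1'⟩ := rfacts h0' h1'
  have hπ : (0:ℝ) < π := Real.pi_pos
  set s : ℝ := Real.sqrt (1 - 4*ℓ^2) with hs_def
  set s₀ : ℝ := Real.sqrt (1 - 4*ℓ₀^2) with hs0_def
  set r : ℝ := (1 - s)/(2*ℓ) with hr_def
  set r₀ : ℝ := (1 - s₀)/(2*ℓ₀) with hr0_def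
  set a : ℝ := (1 + s)/2 with ha_def
  set a₀ : ℝ := (1 + s₀)/2 with ha0_def
  have ha : 0 < a := by rw [ha_def]; linarith
  have ha₀ : 0 < a₀ := by rw [ha0_def]; linarith
  set K : ℝ := Real.log a - Real.log a₀ with hK
  -- pointwise identity
  have hpt : ∀ x ∈ Set.uIcc (0:ℝ) (2*π),
      cardioidDensity μ ℓ x * Real.log (cardioidDensity μ ℓ x / cardioidDensity μ ℓ₀ x)
      = (1/(2*π)) * ((K + Real.log (1 + r^2 + 2*r*Real.cos (x-μ))
            - Real.log (1 + r₀^2 + 2*r₀*Real.cos (x-μ)))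
        + 2*ℓ*(K*Real.cos (x-μ)
            + Real.cos (x-μ) * Real.log (1 + r^2 + 2*r*Real.cos (x-μ))
            - Real.cos (x-μ) * Real.log (1 + r₀^2 + 2*r₀*Real.cos (x-μ)))) := by
    intro x _
    have hc : -1 ≤ Real.cos (x-μ) := Real.neg_one_le_cos _
    have hc' : Real.cos (x-μ) ≤ 1 := Real.cos_le_one _
    set c : ℝ := Real.cos (x-μ) with hc_def
    have hp : (0:ℝ) < 1 + 2*ℓ*c := by nlinarith
    have hq : (0:ℝ) < 1 + 2*ℓ₀*c := by nlinarith
    have hD : (0:ℝ) < 1 + r^2 + 2*r*c := Dpos hr0 hr1 hc hc'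
    have hD₀ : (0:ℝ) < 1 + r₀^2 + 2*r₀*c := Dpos hr0' hr1' hc hc'
    have hdec := decomp h0 h1 c
    have hdec₀ := decomp h0' h1' c
    rw [← hs_def, ← hr_def, ← ha_def] at hdec
    rw [← hs0_def, ← hr0_def, ← ha0_def] at hdec₀
    unfold cardioidDensity
    rw [← hc_def]
    have hratio : (1 + 2*ℓ*c)/(2*π) / ((1 + 2*ℓ₀*c)/(2*π)) = (1 + 2*ℓ*c)/(1 + 2*ℓ₀*c) := by
      field_simp
    rw [hratio, Real.log_div hp.ne' hq.ne']
    have hlog : Real.log (1 + 2*ℓ*c) = Real.log a + Real.log (1 + r^2 + 2*r*c) := by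
      rw [hdec, Real.log_mul ha.ne' hD.ne']
    have hlog₀ : Real.log (1 + 2*ℓ₀*c) = Real.log a₀ + Real.log (1 + r₀^2 + 2*r₀*c) := by
      rw [hdec₀, Real.log_mul ha₀.ne' hD₀.ne']
    rw [hlog, hlog₀, hK]
    ring
  rw [intervalIntegral.integral_congr hpt, intervalIntegral.integral_const_mul]
  -- continuity facts
  have hDc : Continuous fun x : ℝ => 1 + r^2 + 2*r*Real.cos (x-μ) := by fun_prop
  have hDc₀ : Continuous fun x : ℝ => 1 + r₀^2 + 2*r₀*Real.cos (x-μ) := by fun_prop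
  have hA : Continuous fun x : ℝ => Real.log (1 + r^2 + 2*r*Real.cos (x-μ)) :=
    hDc.log fun x => (Dpos hr0 hr1 (Real.neg_one_le_cos _) (Real.cos_le_one _)).ne'
  have hB : Continuous fun x : ℝ => Real.log (1 + r₀^2 + 2*r₀*Real.cos (x-μ)) :=
    hDc₀.log fun x => (Dpos hr0' hr1' (Real.neg_one_le_cos _) (Real.cos_le_one _)).ne'
  have hcos : Continuous fun x : ℝ => Real.cos (x-μ) := by fun_prop
  -- values of the six integrals
  have e1 : ∫ x in (0:ℝ)..(2*π), K = 2*π*K := by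
    rw [intervalIntegral.integral_const, smul_eq_mul]; ring
  have e2 : ∫ x in (0:ℝ)..(2*π), Real.log (1 + r^2 + 2*r*Real.cos (x-μ)) = 0 :=
    shift_log μ hr0.le hr1
  have e3 : ∫ x in (0:ℝ)..(2*π), Real.log (1 + r₀^2 + 2*r₀*Real.cos (x-μ)) = 0 :=
    shift_log μ hr0'.le hr1'
  have e4 : ∫ x in (0:ℝ)..(2*π), K * Real.cos (x-μ) = 0 := by
    rw [intervalIntegral.integral_const_mul, int_cos_shift, mul_zero]
  have e5 : ∫ x in (0:ℝ)..(2*π),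
      Real.cos (x-μ) * Real.log (1 + r^2 + 2*r*Real.cos (x-μ)) = 2*π*r :=
    shift_coslog μ hr0.le hr1
  have e6 : ∫ x in (0:ℝ)..(2*π),
      Real.cos (x-μ) * Real.log (1 + r₀^2 + 2*r₀*Real.cos (x-μ)) = 2*π*r₀ :=
    shift_coslog μ hr0'.le hr1'
  -- split the integral
  have split : ∫ x in (0:ℝ)..(2*π),
      ((K + Real.log (1 + r^2 + 2*r*Real.cos (x-μ))
            - Real.log (1 + r₀^2 + 2*r₀*Real.cos (x-μ)))
        + 2*ℓ*(K*Real.cos (x-μ)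
            + Real.cos (x-μ) * Real.log (1 + r^2 + 2*r*Real.cos (x-μ))
            - Real.cos (x-μ) * Real.log (1 + r₀^2 + 2*r₀*Real.cos (x-μ))))
      = 2*π*K + 2*ℓ*(2*π*r - 2*π*r₀) := by
    have i1 : IntervalIntegrable (fun _ : ℝ => K) volume 0 (2*π) := intervalIntegrable_const
    have i2 : IntervalIntegrable (fun x : ℝ => Real.log (1 + r^2 + 2*r*Real.cos (x-μ)))
        volume 0 (2*π) := hA.intervalIntegrable _ _
    have i3 : IntervalIntegrable (fun x : ℝ => Real.log (1 + r₀^2 + 2*r₀*Real.cos (x-μ)))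
        volume 0 (2*π) := hB.intervalIntegrable _ _
    have i4 : IntervalIntegrable (fun x : ℝ => K * Real.cos (x-μ)) volume 0 (2*π) :=
      (continuous_const.mul hcos).intervalIntegrable _ _
    have i5 : IntervalIntegrable
        (fun x : ℝ => Real.cos (x-μ) * Real.log (1 + r^2 + 2*r*Real.cos (x-μ)))
        volume 0 (2*π) := (hcos.mul hA).intervalIntegrable _ _
    have i6 : IntervalIntegrable
        (fun x : ℝ => Real.cos (x-μ) * Real.log (1 + r₀^2 + 2*r₀*Real.cos (x-μ)))
        volume 0 (2*π) := (hcos.mul hB).intervalIntegrable _ _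
    rw [intervalIntegral.integral_add (((i1.add i2).sub i3))
        (((i4.add i5).sub i6).const_mul (2*ℓ)),
      intervalIntegral.integral_const_mul,
      intervalIntegral.integral_sub (i1.add i2) i3,
      intervalIntegral.integral_add i1 i2,
      intervalIntegral.integral_sub (i4.add i5) i6,
      intervalIntegral.integral_add i4 i5,
      e1, e2, e3, e4, e5, e6]
    ring
  rw [split]
  -- final algebra
  have hhalf := half_log h0 h1
  have hhalf₀ := half_log h0' h1'
  rw [← hs_def, ← ha_def] at hhalf
  rw [← hs0_def, ← ha0_def] at hhalf₀
  have h2lr : 2*ℓ*r = 1 - s := by rw [hr_def]; field_simp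
  have h2lr₀ : 2*ℓ*r₀ = (ℓ/ℓ₀)*(1 - s₀) := by rw [hr0_def]; field_simp
  have hfin : (1/(2*π)) * (2*π*K + 2*ℓ*(2*π*r - 2*π*r₀)) = K + (2*ℓ*r - 2*ℓ*r₀) := by
    field_simp
  rw [hfin, hK]
  linear_combination h2lr - h2lr₀ - hhalf + hhalf₀
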